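/- In the signature with exactly two constant symbols a,b, for every id-model M with universe W and domain D and every state s ⊆ W: (i) M,s ⊨ =(a;b) iff the relation R_s is (the graph of) a partial function; (ii) M,s ⊨ =(b;a) iff R_s is injective (i.e., (d,e),(d',e) ∈ R_s implies d = d'); (iii) M,s ⊭ ∃̷x(x≠a) iff the domain of R_s equals D; (iv) M,s ⊨ ∃̷x(x≠b) iff the range of R_s is a proper subset of D. -/

import Mathlib

namespace InqBQ

/-- A signature: predicate symbols and function symbols, each with an arity. -/
structure Sig where
  Pred : Type
  parity : Pred → ℕ
  Func : Type
  farity : Func → ℕ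

/-- Terms over a signature, with variables indexed by `ℕ`. -/
inductive Term (σ : Sig) : Type where
  | var : ℕ → Term σ
  | func : (f : σ.Func) → (Fin (σ.farity f) → Term σ) → Term σ

/-- Formulas of InqBQ. -/
inductive Formula (σ : Sig) : Type where
  | pred : (P : σ.Pred) → (Fin (σ.parity P) → Term σ) → Formula σ
  | eq : Term σ → Term σ → Formula σ
  | falsum : Formula σ
  | conj : Formula σ → Formula σ → Formula σ
  | idisj : Formula σ → Formula σ → Formula σ
  | impl : Formula σ → Formula σ → Formula σ
  | all : ℕ → Formula σ → Formula σ
  | iex : ℕ → Formula σ → Formula σ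

variable {σ : Sig}

/-- ¬φ := φ → ⊥ -/
def Formula.neg (φ : Formula σ) : Formula σ := .impl φ .falsum

/-- ?φ := φ ⩒ ¬φ -/
def Formula.qm (φ : Formula σ) : Formula σ := .idisj φ φ.neg

/-- ⊤ := ¬⊥ -/
def Formula.verum : Formula σ := Formula.neg .falsum

/-- Classical formulas: no inquisitive disjunction, no inquisitive existential. -/
def Formula.IsClassical : Formula σ → Prop
  | .pred _ _ => True
  | .eq _ _ => True
  | .falsum => True
  | .conj φ ψ => φ.IsClassical ∧ ψ.IsClassical
  | .idisj _ _ => False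
  | .impl φ ψ => φ.IsClassical ∧ ψ.IsClassical
  | .all _ φ => φ.IsClassical
  | .iex _ _ => False

/-- The variable `n` occurs in a term. -/
def Term.VarOccurs : Term σ → ℕ → Prop
  | .var m, n => m = n
  | .func _ ts, n => ∃ i, (ts i).VarOccurs n

/-- The variable `n` occurs free in a formula. -/
def Formula.FreeVar : Formula σ → ℕ → Prop
  | .pred _ ts, n => ∃ i, (ts i).VarOccurs n
  | .eq t t', n => t.VarOccurs n ∨ t'.VarOccurs n
  | .falsum, _ => False
  | .conj φ ψ, n => φ.FreeVar n ∨ ψ.FreeVar n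
  | .idisj φ ψ, n => φ.FreeVar n ∨ ψ.FreeVar n
  | .impl φ ψ, n => φ.FreeVar n ∨ ψ.FreeVar n
  | .all x φ, n => n ≠ x ∧ φ.FreeVar n
  | .iex x φ, n => n ≠ x ∧ φ.FreeVar n

/-- A sentence is a formula with no free variables. -/
def Formula.IsSentence (φ : Formula σ) : Prop := ∀ n, ¬ φ.FreeVar n

/-- A first-order information model `M = (W, D, I, ∼)`. -/
structure Model (σ : Sig) where
  W : Type
  D : Type
  wNonempty : Nonempty W
  dNonempty : Nonempty D
  predI : W → (P : σ.Pred) → (Fin (σ.parity P) → D) → Prop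
  funcI : W → (f : σ.Func) → (Fin (σ.farity f) → D) → D
  eqI : W → D → D → Prop
  eqEquiv : ∀ w, Equivalence (eqI w)
  predCongr : ∀ w P (as bs : Fin (σ.parity P) → D),
      (∀ i, eqI w (as i) (bs i)) → (predI w P as ↔ predI w P bs)
  funcCongr : ∀ w f (as bs : Fin (σ.farity f) → D),
      (∀ i, eqI w (as i) (bs i)) → eqI w (funcI w f as) (funcI w f bs)

/-- Denotation `[t]^g_w` of a term at a world under an assignment. -/
def Term.val (M : Model σ) (w : M.W) (g : ℕ → M.D) : Term σ → M.D
  | .var n => g n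
  | .func f ts => M.funcI w f (fun i => (ts i).val M w g)

/-- The support relation `M, s ⊨_g φ`. -/
def Support (M : Model σ) : Set M.W → (ℕ → M.D) → Formula σ → Prop
  | s, g, .pred P ts => ∀ w ∈ s, M.predI w P (fun i => (ts i).val M w g)
  | s, g, .eq t t' => ∀ w ∈ s, M.eqI w (t.val M w g) (t'.val M w g)
  | s, _, .falsum => s = ∅
  | s, g, .conj φ ψ => Support M s g φ ∧ Support M s g ψ
  | s, g, .idisj φ ψ => Support M s g φ ∨ Support M s g ψ
  | s, g, .impl φ ψ => ∀ t : Set M.W, t ⊆ s → Support M t g φ → Support M t g ψ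
  | s, g, .all x φ => ∀ d : M.D, Support M s (Function.update g x d) φ
  | s, g, .iex x φ => ∃ d : M.D, Support M s (Function.update g x d) φ

/-- Id-models: `=` is interpreted as identity on the domain at each world. -/
def Model.IsId (M : Model σ) : Prop := ∀ w (d d' : M.D), M.eqI w d d' ↔ d = d'

/-- Entailment in InqBQ. -/
def Entails (Φ : Set (Formula σ)) (ψ : Formula σ) : Prop :=
  ∀ (M : Model σ) (s : Set M.W) (g : ℕ → M.D),
    (∀ φ ∈ Φ, Support M s g φ) → Support M s g ψ

/-- Entailment restricted to id-models. -/
def EntailsId (Φ : Set (Formula σ)) (ψ : Formula σ) : Prop :=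
  ∀ (M : Model σ), M.IsId → ∀ (s : Set M.W) (g : ℕ → M.D),
    (∀ φ ∈ Φ, Support M s g φ) → Support M s g ψ

/-- Validity in InqBQ. -/
def Valid (ψ : Formula σ) : Prop :=
  ∀ (M : Model σ) (s : Set M.W) (g : ℕ → M.D), Support M s g ψ

/-- Validity over id-models. -/
def IdValid (ψ : Formula σ) : Prop :=
  ∀ (M : Model σ), M.IsId → ∀ (s : Set M.W) (g : ℕ → M.D), Support M s g ψ

/-- Equivalence of formulas. -/
def FmEquiv (φ ψ : Formula σ) : Prop :=
  ∀ (M : Model σ) (s : Set M.W) (g : ℕ → M.D), Support M s g φ ↔ Support M s g ψ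

/-- A formula is truth-conditional if support at a state reduces to truth at each world. -/
def TruthConditional (φ : Formula σ) : Prop :=
  ∀ (M : Model σ) (s : Set M.W) (g : ℕ → M.D),
    Support M s g φ ↔ ∀ w ∈ s, Support M {w} g φ

/-- A standard (Tarskian) relational structure for the signature. -/
structure Struc (σ : Sig) where
  D : Type
  dNonempty : Nonempty D
  predI : (P : σ.Pred) → (Fin (σ.parity P) → D) → Prop
  funcI : (f : σ.Func) → (Fin (σ.farity f) → D) → D

/-- Tarskian term denotation. -/
def Term.tval (A : Struc σ) (g : ℕ → A.D) : Term σ → A.D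
  | .var n => g n
  | .func f ts => A.funcI f (fun i => (ts i).tval A g)

/-- Standard Tarskian satisfaction (reading `→` as material implication, `=` as identity). -/
def TSat (A : Struc σ) : (ℕ → A.D) → Formula σ → Prop
  | g, .pred P ts => A.predI P (fun i => (ts i).tval A g)
  | g, .eq t t' => t.tval A g = t'.tval A g
  | _, .falsum => False
  | g, .conj φ ψ => TSat A g φ ∧ TSat A g ψ
  | g, .idisj φ ψ => TSat A g φ ∨ TSat A g ψ
  | g, .impl φ ψ => TSat A g φ → TSat A g ψ
  | g, .all x φ => ∀ d : A.D, TSat A (Function.update g x d) φ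
  | g, .iex x φ => ∃ d : A.D, TSat A (Function.update g x d) φ

/-- Classical first-order (Tarskian) entailment. -/
def FOLEntails (Γ : Set (Formula σ)) (α : Formula σ) : Prop :=
  ∀ (A : Struc σ) (g : ℕ → A.D), (∀ γ ∈ Γ, TSat A g γ) → TSat A g α

/-- The setoid on the domain given by `∼_w`. -/
def Model.setoidAt (M : Model σ) (w : M.W) : Setoid M.D := ⟨M.eqI w, M.eqEquiv w⟩

/-- The quotient relational structure `𝓜_w = (D/∼_w, I_w^∼)` induced at world `w`. -/
noncomputable def Model.quotStruc (M : Model σ) (w : M.W) : Struc σ where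
  D := Quotient (M.setoidAt w)
  dNonempty := Nonempty.map (Quotient.mk (M.setoidAt w)) M.dNonempty
  predI P as := ∃ bs : Fin (σ.parity P) → M.D,
    (∀ i, Quotient.mk (M.setoidAt w) (bs i) = as i) ∧ M.predI w P bs
  funcI f as := Quotient.mk (M.setoidAt w) (M.funcI w f (fun i => (as i).out))

/-- λt := ∃̷x (x = t). -/
def lam (x : ℕ) (t : Term σ) : Formula σ := .iex x (.eq (.var x) t)

/-- Conjunction of a finite list of formulas. -/
def conjList (l : List (Formula σ)) : Formula σ := l.foldr .conj Formula.verum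

/-- x ≠ t. -/
def neTm (x : ℕ) (t : Term σ) : Formula σ := (Formula.eq (.var x) t).neg

/-- ∃̷x (x ≠ t). -/
def iexNe (t : Term σ) : Formula σ := .iex 0 (neTm 0 t)

/-- η := (=(a;b) ∧ =(b;a) ∧ ∃̷x(x≠b)) → ∃̷x(x≠a). -/
def etaOf (a b : Term σ) : Formula σ :=
  .impl (.conj (.impl (lam 0 a) (lam 0 b))
          (.conj (.impl (lam 0 b) (lam 0 a)) (iexNe b)))
    (iexNe a)

/-- θ := ∃̷x ∃̷y ¬(x = a ∧ y = b). -/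
def thetaOf (a b : Term σ) : Formula σ :=
  .iex 0 (.iex 1 (Formula.neg (.conj (.eq (.var 0) a) (.eq (.var 1) b))))

/-- ρ := ∀x∀y ?(x = y). -/
def rho : Formula σ := .all 0 (.all 1 (Formula.qm (.eq (.var 0) (.var 1))))

/-- The signature with exactly two constant symbols `a`, `b` (and no predicates). -/
def sigAB : Sig where
  Pred := Empty
  parity := fun P => P.elim
  Func := Bool
  farity := fun _ => 0

/-- The constant `a`. -/
def tA : Term sigAB := .func false Fin.elim0

/-- The constant `b`. -/
def tB : Term sigAB := .func true Fin.elim0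

def etaAB : Formula sigAB := etaOf tA tB

def thetaAB : Formula sigAB := thetaOf tA tB

/-- `a_w`. -/
def aVal (M : Model sigAB) (w : M.W) : M.D := M.funcI w false Fin.elim0

/-- `b_w`. -/
def bVal (M : Model sigAB) (w : M.W) : M.D := M.funcI w true Fin.elim0

/-- `R_s = {(a_w, b_w) | w ∈ s}`. -/
def RelOf (M : Model sigAB) (s : Set M.W) : Set (M.D × M.D) :=
  {p | ∃ w ∈ s, p = (aVal M w, bVal M w)}

/-- An id-model (for the signature with the two constants a, b) is full if `R_W = D × D`. -/
def Model.IsFull (M : Model sigAB) : Prop := RelOf M Set.univ = Set.univ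

/-- Classical existential quantifier ∃xφ := ¬∀x¬φ. -/
def cExists (x : ℕ) (φ : Formula σ) : Formula σ := (Formula.all x φ.neg).neg

/-- ⋀_{i<j<n} (xᵢ ≠ xⱼ). -/
def distinctFm (n : ℕ) : Formula sigAB :=
  conjList ((List.range n).flatMap fun i => (List.range n).filterMap fun j =>
    if i < j then some ((Formula.eq (.var i) (.var j)).neg) else none)

/-- χₙ := ∃x₁…∃xₙ ⋀_{i<j} (xᵢ ≠ xⱼ), expressing that there are at least n elements. -/
def chi (n : ℕ) : Formula sigAB := (List.range n).foldr cExists (distinctFm n)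

/-- The canonical full id-model over a nonempty domain `D`: worlds are pairs `(d, e)`,
with `a_{(d,e)} = d` and `b_{(d,e)} = e`. -/
def canonModel (D : Type) (hD : Nonempty D) : Model sigAB where
  W := D × D
  D := D
  wNonempty := Nonempty.map (fun d => (d, d)) hD
  dNonempty := hD
  predI := fun _ P => P.elim
  funcI := fun w f _ => cond f w.2 w.1
  eqI := fun _ => Eq
  eqEquiv := fun _ => eq_equivalence
  predCongr := fun _ P => P.elim
  funcCongr := fun _ _ _ _ _ => rfl

/-- Extending a signature with two fresh constant symbols `a`, `b`. -/
def sigExt (σ : Sig) : Sig where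
  Pred := σ.Pred
  parity := σ.parity
  Func := σ.Func ⊕ Bool
  farity := Sum.elim σ.farity (fun _ => 0)

/-- Lift of a term to the extended signature. -/
def Term.lift : Term σ → Term (sigExt σ)
  | .var n => .var n
  | .func f ts => .func (Sum.inl f) (fun i => (ts i).lift)

/-- Lift of a formula to the extended signature. -/
def Formula.lift : Formula σ → Formula (sigExt σ)
  | .pred P ts => .pred P (fun i => (ts i).lift)
  | .eq t t' => .eq t.lift t'.lift
  | .falsum => .falsum
  | .conj φ ψ => .conj φ.lift ψ.lift
  | .idisj φ ψ => .idisj φ.lift ψ.lift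
  | .impl φ ψ => .impl φ.lift ψ.lift
  | .all x φ => .all x φ.lift
  | .iex x φ => .iex x φ.lift

/-- The fresh constant `a` of the extended signature. -/
def extA : Term (sigExt σ) := .func (Sum.inr false) Fin.elim0

/-- The fresh constant `b` of the extended signature. -/
def extB : Term (sigExt σ) := .func (Sum.inr true) Fin.elim0

/-- The canonical full id-model based on a relational structure `𝓜`: worlds are pairs
`(d, e)`; `a_{(d,e)} = d`, `b_{(d,e)} = e`, and all symbols of `σ` are interpreted
rigidly as in `𝓜`. -/
def canonModelOf (A : Struc σ) : Model (sigExt σ) where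
  W := A.D × A.D
  D := A.D
  wNonempty := Nonempty.map (fun d => (d, d)) A.dNonempty
  dNonempty := A.dNonempty
  predI := fun _ P => A.predI P
  funcI := fun w f => match f with
    | .inl f₀ => fun as => A.funcI f₀ as
    | .inr b => fun _ => cond b w.2 w.1
  eqI := fun _ => Eq
  eqEquiv := fun _ => eq_equivalence
  predCongr := fun _ P as bs h => by
    have hab : as = bs := funext fun i => h i
    rw [hab]
  funcCongr := fun w f as bs h => by
    have hab : as = bs := funext fun i => h i
    rw [hab]


lemma fin0_eq {α : Sort _} (f : Fin 0 → α) : f = Fin.elim0 := funext fun i => i.elim0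

lemma val_const (M : Model sigAB) (w : M.W) (g : ℕ → M.D) (c : Bool)
    (ts : Fin (sigAB.farity c) → Term sigAB) :
    Term.val M w g (Term.func c ts) = M.funcI w c Fin.elim0 := by
  show M.funcI w c _ = _
  exact congrArg _ (fin0_eq _)

lemma supp_lam (M : Model sigAB) (hid : M.IsId) (t : Set M.W) (g : ℕ → M.D)
    (c : Bool) (ts : Fin (sigAB.farity c) → Term sigAB) :
    Support M t g (lam 0 (Term.func c ts)) ↔ ∃ d, ∀ w ∈ t, M.funcI w c Fin.elim0 = d := by
  simp only [lam, Support]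
  refine exists_congr fun d => forall₂_congr fun w hw => ?_
  rw [hid, val_const]
  simp [Term.val, eq_comm]

lemma supp_iexNe (M : Model sigAB) (hid : M.IsId) (s : Set M.W) (g : ℕ → M.D)
    (c : Bool) (ts : Fin (sigAB.farity c) → Term sigAB) :
    Support M s g (iexNe (Term.func c ts)) ↔ ∃ d, ∀ w ∈ s, M.funcI w c Fin.elim0 ≠ d := by
  simp only [iexNe, neTm, Formula.neg, Support]
  refine exists_congr fun d => ?_
  constructor
  · intro h w hw heq
    have h1 : ({w} : Set M.W) ⊆ s := Set.singleton_subset_iff.mpr hw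
    have h2 : ({w} : Set M.W) = ∅ := by
      refine h {w} h1 ?_
      intro u hu
      rw [Set.mem_singleton_iff] at hu
      subst hu
      rw [hid, val_const]
      simp [Term.val, heq]
    exact Set.singleton_ne_empty w h2
  · intro h u hu hsupp
    rw [Set.eq_empty_iff_forall_notMem]
    intro w hw
    have := hsupp w hw
    rw [hid, val_const] at this
    simp only [Term.val, Function.update_self] at this
    exact h w (hu hw) this.symm

/-- In the signature with exactly two constants a, b, for every id-model and
state: (i) s supports =(a;b) iff R_s is a partial function; (ii) s supports =(b;a) iff
R_s is injective; (iii) s does not support ∃̷x(x≠a) iff dom(R_s) = D; (iv) s supports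
∃̷x(x≠b) iff ran(R_s) is a proper subset of D. -/
theorem ab_formulas_semantics (M : Model sigAB) (hid : M.IsId) (s : Set M.W)
    (g : ℕ → M.D) :
    (Support M s g (.impl (lam 0 tA) (lam 0 tB)) ↔
      ∀ d e e' : M.D, (d, e) ∈ RelOf M s → (d, e') ∈ RelOf M s → e = e') ∧
    (Support M s g (.impl (lam 0 tB) (lam 0 tA)) ↔
      ∀ d d' e : M.D, (d, e) ∈ RelOf M s → (d', e) ∈ RelOf M s → d = d') ∧
    (¬ Support M s g (iexNe tA) ↔ {d : M.D | ∃ e, (d, e) ∈ RelOf M s} = Set.univ) ∧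
    (Support M s g (iexNe tB) ↔ {e : M.D | ∃ d, (d, e) ∈ RelOf M s} ⊂ Set.univ) := by
  obtain ⟨d₀⟩ := M.dNonempty
  have hmem : ∀ (d e : M.D), (d, e) ∈ RelOf M s ↔ ∃ w ∈ s, d = aVal M w ∧ e = bVal M w := by
    intro d e
    simp only [RelOf, Set.mem_setOf_eq, Prod.mk.injEq]
  refine ⟨?_, ?_, ?_, ?_⟩
  · show (∀ t : Set M.W, t ⊆ s → Support M t g (lam 0 tA) → Support M t g (lam 0 tB)) ↔ _
    constructor
    · intro h d e e' he he'
      rw [hmem] at he he'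
      obtain ⟨w, hw, rfl, rfl⟩ := he
      obtain ⟨w', hw', hd, rfl⟩ := he'
      have hsub : ({w, w'} : Set M.W) ⊆ s := by
        intro u hu
        rcases hu with rfl | hu
        · exact hw
        · rw [Set.mem_singleton_iff] at hu; subst hu; exact hw'
      have hA : Support M {w, w'} g (lam 0 tA) := by
        erw [show tA = Term.func false Fin.elim0 from rfl, supp_lam M hid]
        refine ⟨aVal M w, ?_⟩
        intro u hu
        rcases hu with rfl | hu
        · rfl
        · rw [Set.mem_singleton_iff] at hu; subst hu; exact hd.symm
      have hB := h {w, w'} hsub hA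
      erw [show tB = Term.func true Fin.elim0 from rfl, supp_lam M hid] at hB
      obtain ⟨e₀, he₀⟩ := hB
      have h1 := he₀ w (by left; rfl)
      have h2 := he₀ w' (by right; rfl)
      exact h1.trans h2.symm
    · intro h t ht hA
      erw [show tA = Term.func false Fin.elim0 from rfl, supp_lam M hid] at hA
      erw [show tB = Term.func true Fin.elim0 from rfl, supp_lam M hid]
      obtain ⟨d, hd⟩ := hA
      rcases Set.eq_empty_or_nonempty t with rfl | ⟨w₀, hw₀⟩
      · exact ⟨d₀, fun w hw => absurd hw (Set.notMem_empty w)⟩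
      · refine ⟨bVal M w₀, fun w hw => ?_⟩
        refine h d (bVal M w) (bVal M w₀) ?_ ?_
        · rw [hmem]; exact ⟨w, ht hw, (hd w hw).symm, rfl⟩
        · rw [hmem]; exact ⟨w₀, ht hw₀, (hd w₀ hw₀).symm, rfl⟩
  · show (∀ t : Set M.W, t ⊆ s → Support M t g (lam 0 tB) → Support M t g (lam 0 tA)) ↔ _
    constructor
    · intro h d d' e he he'
      rw [hmem] at he he'
      obtain ⟨w, hw, rfl, rfl⟩ := he
      obtain ⟨w', hw', rfl, he⟩ := he'
      have hsub : ({w, w'} : Set M.W) ⊆ s := by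
        intro u hu
        rcases hu with rfl | hu
        · exact hw
        · rw [Set.mem_singleton_iff] at hu; subst hu; exact hw'
      have hB : Support M {w, w'} g (lam 0 tB) := by
        erw [show tB = Term.func true Fin.elim0 from rfl, supp_lam M hid]
        refine ⟨bVal M w, ?_⟩
        intro u hu
        rcases hu with rfl | hu
        · rfl
        · rw [Set.mem_singleton_iff] at hu; subst hu; exact he.symm
      have hA := h {w, w'} hsub hB
      erw [show tA = Term.func false Fin.elim0 from rfl, supp_lam M hid] at hA
      obtain ⟨e₀, he₀⟩ := hA
      have h1 := he₀ w (by left; rfl)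
      have h2 := he₀ w' (by right; rfl)
      exact h1.trans h2.symm
    · intro h t ht hB
      erw [show tB = Term.func true Fin.elim0 from rfl, supp_lam M hid] at hB
      erw [show tA = Term.func false Fin.elim0 from rfl, supp_lam M hid]
      obtain ⟨e, he⟩ := hB
      rcases Set.eq_empty_or_nonempty t with rfl | ⟨w₀, hw₀⟩
      · exact ⟨d₀, fun w hw => absurd hw (Set.notMem_empty w)⟩
      · refine ⟨aVal M w₀, fun w hw => ?_⟩
        refine h (aVal M w) (aVal M w₀) e ?_ ?_
        · rw [hmem]; exact ⟨w, ht hw, rfl, (he w hw).symm⟩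
        · rw [hmem]; exact ⟨w₀, ht hw₀, rfl, (he w₀ hw₀).symm⟩
  · erw [show tA = Term.func false Fin.elim0 from rfl, supp_iexNe M hid]
    rw [Set.eq_univ_iff_forall]
    push_neg
    refine forall_congr' fun d => ?_
    constructor
    · rintro ⟨w, hw, haw⟩
      exact ⟨bVal M w, (hmem d (bVal M w)).mpr ⟨w, hw, haw.symm, rfl⟩⟩
    · rintro ⟨e, he⟩
      rw [hmem] at he
      obtain ⟨w, hw, rfl, rfl⟩ := he
      exact ⟨w, hw, rfl⟩
  · erw [show tB = Term.func true Fin.elim0 from rfl, supp_iexNe M hid]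
    rw [Set.ssubset_iff_subset_ne]
    simp only [Set.subset_univ, true_and, ne_eq, Set.eq_univ_iff_forall]
    push_neg
    constructor
    · rintro ⟨d, hd⟩
      refine ⟨d, ?_⟩
      simp only [Set.mem_setOf_eq]
      rintro ⟨e, he⟩
      rw [hmem] at he
      obtain ⟨w, hw, rfl, rfl⟩ := he
      exact hd w hw rfl
    · rintro ⟨d, hd⟩
      simp only [Set.mem_setOf_eq] at hd
      refine ⟨d, fun w hw hbw => ?_⟩
      exact hd ⟨aVal M w, (hmem (aVal M w) d).mpr ⟨w, hw, rfl, hbw.symm⟩⟩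


end InqBQ
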